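/- Let δ, k, n be integers with δ ≥ 1, 0 ≤ k < δ, and n > 2δ−k+1. Then q(H(n,δ,k)) is equal to the largest real root of g(x) = 0, where g(x) = x³ − (3n−δ+2k−6)x² + (2n² + (δ+2k−8)n − 4δ² + 4(k−1)δ − 4k + 8)x − 2δ³ + (4n+4k−10)δ² − (2n² + (4k−10)n + 2k² − 10k + 12)δ and H(n,δ,k) = K_δ ∨ ((δ−k+1)K_1 ∪ K_{n−2δ+k−1}). -/

import Mathlib

/-- Adjacency matrix over ℝ (with classical decidability of adjacency). -/
noncomputable def adjMat {V : Type*} [Fintype V] [DecidableEq V] (G : SimpleGraph V) :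
    Matrix V V ℝ :=
  letI := Classical.decRel G.Adj
  G.adjMatrix ℝ

/-- Degree diagonal matrix over ℝ. -/
noncomputable def degMat {V : Type*} [Fintype V] [DecidableEq V] (G : SimpleGraph V) :
    Matrix V V ℝ :=
  letI := Classical.decRel G.Adj
  Matrix.diagonal fun v => (G.degree v : ℝ)

/-- The spectral radius of a graph: the largest eigenvalue of its adjacency matrix. -/
noncomputable def grho {V : Type*} [Fintype V] [DecidableEq V] (G : SimpleGraph V) : ℝ :=
  sSup (spectrum ℝ (adjMat G))

/-- The signless Laplacian spectral radius of a graph: the largest eigenvalue of D(G) + A(G). -/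
noncomputable def gq {V : Type*} [Fintype V] [DecidableEq V] (G : SimpleGraph V) : ℝ :=
  sSup (spectrum ℝ (degMat G + adjMat G))

/-- The graph `K_s ∨ (m K_r ∪ K_{n - s - m*r})` on `Fin n`:
vertices `< s` form the out clique joined to everything, the next `m*r` vertices form
`m` disjoint copies of `K_r`, and the remaining vertices form a clique. -/
def Hgen (n s m r : ℕ) : SimpleGraph (Fin n) where
  Adj u v := u ≠ v ∧ ((u : ℕ) < s ∨ (v : ℕ) < s ∨
    (s + m * r ≤ (u : ℕ) ∧ s + m * r ≤ (v : ℕ)) ∨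
    (s ≤ (u : ℕ) ∧ s ≤ (v : ℕ) ∧ (u : ℕ) < s + m * r ∧ (v : ℕ) < s + m * r ∧
      ((u : ℕ) - s) / r = ((v : ℕ) - s) / r))
  symm := by
    refine ⟨?_⟩
    rintro u v ⟨h1, h2⟩
    refine ⟨h1.symm, ?_⟩
    rcases h2 with h | h | ⟨h, h'⟩ | ⟨h1', h2', h3', h4', h5'⟩
    · exact Or.inr (Or.inl h)
    · exact Or.inl h
    · exact Or.inr (Or.inr (Or.inl ⟨h', h⟩))
    · exact Or.inr (Or.inr (Or.inr ⟨h2', h1', h4', h3', h5'.symm⟩))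
  loopless := by refine ⟨?_⟩; rintro u ⟨h1, -⟩; exact h1 rfl

/-- `K_δ ∨ ((δ-k+1) K_1 ∪ K_{n-2δ+k-1})`. -/
def Hndk (n δ k : ℕ) : SimpleGraph (Fin n) := Hgen n δ (δ - k + 1) 1

/-- A graph is `k`-factor-critical if deleting any `k` vertices leaves a graph
with a perfect matching. -/
def kFactorCritical {V : Type*} [Fintype V] (G : SimpleGraph V) (k : ℕ) : Prop :=
  ∀ S : Finset V, S.card = k →
    ∃ M : (G.induce ((S : Set V)ᶜ)).Subgraph, M.IsPerfectMatching


open Finset Matrix Polynomial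

def gfun (N S M x : ℝ) : ℝ :=
  x ^ 3 - (3*N - S + 2*(S - M + 1) - 6) * x ^ 2
    + (2*N^2 + (S + 2*(S - M + 1) - 8)*N - 4*S^2 + 4*((S - M + 1) - 1)*S - 4*(S - M + 1) + 8) * x
    - 2*S^3 + (4*N + 4*(S - M + 1) - 10)*S^2
    - (2*N^2 + (4*(S - M + 1) - 10)*N + 2*(S - M + 1)^2 - 10*(S - M + 1) + 12)*S

lemma det3 (N S M x : ℝ) :
    (x • (1 : Matrix (Fin 3) (Fin 3) ℝ)
      - !![N+S-2, M, N-S-M; S, S, 0; S, 0, 2*N-S-2*M-2]).det = gfun N S M x := by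
  rw [Matrix.det_fin_three]
  simp [gfun, Matrix.one_apply, Matrix.vecHead, Matrix.vecTail]
  ring

lemma eig_iff_det {p : ℕ} (A : Matrix (Fin p) (Fin p) ℝ) (μ : ℝ) :
    (∃ v, v ≠ 0 ∧ A *ᵥ v = μ • v) ↔ (μ • (1 : Matrix (Fin p) (Fin p) ℝ) - A).det = 0 := by
  rw [← Matrix.exists_mulVec_eq_zero_iff]
  constructor <;> rintro ⟨v, h0, hv⟩ <;> refine ⟨v, h0, ?_⟩
  · rw [Matrix.sub_mulVec, Matrix.smul_mulVec, Matrix.one_mulVec, hv, sub_self]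
  · rw [Matrix.sub_mulVec, Matrix.smul_mulVec, Matrix.one_mulVec] at hv
    exact (sub_eq_zero.mp hv).symm

lemma mem_spectrum_iff_det {p : ℕ} (A : Matrix (Fin p) (Fin p) ℝ) (μ : ℝ) :
    μ ∈ spectrum ℝ A ↔ (μ • (1 : Matrix (Fin p) (Fin p) ℝ) - A).det = 0 := by
  rw [spectrum.mem_iff, Matrix.isUnit_iff_isUnit_det, isUnit_iff_ne_zero, not_ne_iff,
    Algebra.algebraMap_eq_smul_one]

lemma mem_spectrum_iff_eig {p : ℕ} (A : Matrix (Fin p) (Fin p) ℝ) (μ : ℝ) :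
    μ ∈ spectrum ℝ A ↔ (∃ v, v ≠ 0 ∧ A *ᵥ v = μ • v) := by
  rw [mem_spectrum_iff_det, eig_iff_det]

lemma Hadj {n s m : ℕ} {u v : Fin n} :
    (Hgen n s m 1).Adj u v ↔ u ≠ v ∧ ((u : ℕ) < s ∨ (v : ℕ) < s ∨
      (s + m ≤ (u : ℕ) ∧ s + m ≤ (v : ℕ))) := by
  constructor
  · rintro ⟨h1, h2⟩
    refine ⟨h1, ?_⟩
    have hne : (u : ℕ) ≠ (v : ℕ) := fun h => h1 (Fin.ext h)
    rcases h2 with h | h | ⟨ha, hb⟩ | ⟨h1', h2', h3', h4', h5'⟩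
    · exact Or.inl h
    · exact Or.inr (Or.inl h)
    · exact Or.inr (Or.inr ⟨by omega, by omega⟩)
    · simp only [Nat.div_one] at h5'; omega
  · rintro ⟨h1, h2⟩
    refine ⟨h1, ?_⟩
    rcases h2 with h | h | ⟨ha, hb⟩
    · exact Or.inl h
    · exact Or.inr (Or.inl h)
    · exact Or.inr (Or.inr (Or.inl ⟨by omega, by omega⟩))

lemma cardIco {n : ℕ} (lo hi : ℕ) (h : hi ≤ n) :
    (Finset.univ.filter fun j : Fin n => lo ≤ (j : ℕ) ∧ (j : ℕ) < hi).card = hi - lo := by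
  rw [← Nat.card_Ico lo hi]
  apply Finset.card_bij (fun (j : Fin n) _ => (j : ℕ))
  · intro a ha; simp only [Finset.mem_filter, Finset.mem_univ, true_and] at ha
    simp only [Finset.mem_Ico]; omega
  · intro a _ b _ hab; exact Fin.ext hab
  · intro b hb; simp only [Finset.mem_Ico] at hb
    exact ⟨⟨b, lt_of_lt_of_le hb.2 h⟩, by simp; omega, rfl⟩

lemma cardIcoErase {n : ℕ} (lo hi : ℕ) (h : hi ≤ n) (i : Fin n)
    (h1 : lo ≤ (i : ℕ)) (h2 : (i : ℕ) < hi) :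
    (Finset.univ.filter fun j : Fin n => (lo ≤ (j : ℕ) ∧ (j : ℕ) < hi) ∧ j ≠ i).card
      = hi - lo - 1 := by
  have hset : (Finset.univ.filter fun j : Fin n => (lo ≤ (j : ℕ) ∧ (j : ℕ) < hi) ∧ j ≠ i)
      = (Finset.univ.filter fun j : Fin n => lo ≤ (j : ℕ) ∧ (j : ℕ) < hi).erase i := by
    ext j; simp [Finset.mem_erase]; tauto
  rw [hset, Finset.card_erase_of_mem (by simp [h1, h2]), cardIco lo hi h]

lemma sum_vv {n : ℕ} (s m : ℕ) (X Y Z : ℝ) (F : Finset (Fin n)) :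
    ∑ j ∈ F, (if (j : ℕ) < s then X else if (j : ℕ) < s + m then Y else Z)
      = (F.filter fun j : Fin n => (j : ℕ) < s).card * X
        + (F.filter fun j : Fin n => s ≤ (j : ℕ) ∧ (j : ℕ) < s + m).card * Y
        + (F.filter fun j : Fin n => s + m ≤ (j : ℕ)).card * Z := by
  classical
  have e1 : ∀ F' : Finset (Fin n), (∀ j ∈ F', (j : ℕ) < s) →
      ∑ j ∈ F', (if (j : ℕ) < s then X else if (j : ℕ) < s + m then Y else Z) = F'.card * X := by
    intro F' h
    rw [← nsmul_eq_mul, ← Finset.sum_const]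
    exact Finset.sum_congr rfl fun j hj => by simp [h j hj]
  have e2 : ∀ F' : Finset (Fin n), (∀ j ∈ F', s ≤ (j : ℕ) ∧ (j : ℕ) < s + m) →
      ∑ j ∈ F', (if (j : ℕ) < s then X else if (j : ℕ) < s + m then Y else Z) = F'.card * Y := by
    intro F' h
    rw [← nsmul_eq_mul, ← Finset.sum_const]
    refine Finset.sum_congr rfl fun j hj => ?_
    have hh := h j hj
    rw [if_neg (by omega), if_pos hh.2]
  have e3 : ∀ F' : Finset (Fin n), (∀ j ∈ F', s + m ≤ (j : ℕ)) →
      ∑ j ∈ F', (if (j : ℕ) < s then X else if (j : ℕ) < s + m then Y else Z) = F'.card * Z := by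
    intro F' h
    rw [← nsmul_eq_mul, ← Finset.sum_const]
    refine Finset.sum_congr rfl fun j hj => ?_
    have hh := h j hj
    rw [if_neg (by omega), if_neg (by omega)]
  rw [← Finset.sum_filter_add_sum_filter_not F (fun j : Fin n => (j : ℕ) < s),
    ← Finset.sum_filter_add_sum_filter_not (F.filter fun j : Fin n => ¬ (j : ℕ) < s)
      (fun j : Fin n => (j : ℕ) < s + m)]
  have hs2 : (F.filter fun j : Fin n => ¬ (j : ℕ) < s).filter (fun j : Fin n => (j : ℕ) < s + m)
      = F.filter fun j : Fin n => s ≤ (j : ℕ) ∧ (j : ℕ) < s + m := by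
    rw [Finset.filter_filter]; apply Finset.filter_congr; intro j _; constructor
    · rintro ⟨h1, h2⟩; exact ⟨by omega, h2⟩
    · rintro ⟨h1, h2⟩; exact ⟨by omega, h2⟩
  have hs3 : (F.filter fun j : Fin n => ¬ (j : ℕ) < s).filter (fun j : Fin n => ¬ (j : ℕ) < s + m)
      = F.filter fun j : Fin n => s + m ≤ (j : ℕ) := by
    rw [Finset.filter_filter]; apply Finset.filter_congr; intro j _; constructor
    · rintro ⟨h1, h2⟩; omega
    · intro h1; omega
  rw [hs2, hs3]
  rw [e1 _ (fun j hj => (Finset.mem_filter.mp hj).2),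
    e2 _ (fun j hj => (Finset.mem_filter.mp hj).2),
    e3 _ (fun j hj => (Finset.mem_filter.mp hj).2)]
  ring

lemma deg_eq (n s m : ℕ) (hs : 1 ≤ s) (hn : s + m < n)
    [DecidableRel (Hgen n s m 1).Adj] (i : Fin n) :
    (Hgen n s m 1).degree i =
      if (i : ℕ) < s then n - 1
      else if (i : ℕ) < s + m then s
      else s + (n - (s + m) - 1) := by
  show ((Hgen n s m 1).neighborFinset i).card = _
  rw [SimpleGraph.neighborFinset_eq_filter]
  rcases Nat.lt_or_ge (i : ℕ) s with hi | hi
  · have hset : (Finset.univ.filter ((Hgen n s m 1).Adj i))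
        = Finset.univ.filter fun j : Fin n => (0 ≤ (j : ℕ) ∧ (j : ℕ) < n) ∧ j ≠ i := by
      ext j; have hjn := j.isLt
      simp only [Finset.mem_filter, Finset.mem_univ, true_and, Hadj, ne_eq, Fin.ext_iff]
      omega
    rw [hset, cardIcoErase 0 n le_rfl i (Nat.zero_le _) i.isLt, if_pos hi]
    omega
  · rcases Nat.lt_or_ge (i : ℕ) (s + m) with hi2 | hi2
    · have hset : (Finset.univ.filter ((Hgen n s m 1).Adj i))
          = Finset.univ.filter fun j : Fin n => 0 ≤ (j : ℕ) ∧ (j : ℕ) < s := by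
        ext j; have hjn := j.isLt
        simp only [Finset.mem_filter, Finset.mem_univ, true_and, Hadj, ne_eq, Fin.ext_iff]
        omega
      rw [hset, cardIco 0 s (by omega), if_neg (by omega), if_pos hi2]
      omega
    · have hsplit := Finset.card_filter_add_card_filter_not
        (s := Finset.univ.filter ((Hgen n s m 1).Adj i)) (p := fun j : Fin n => (j : ℕ) < s)
      have h1 : (Finset.univ.filter ((Hgen n s m 1).Adj i)).filter (fun j : Fin n => (j : ℕ) < s)
          = Finset.univ.filter fun j : Fin n => 0 ≤ (j : ℕ) ∧ (j : ℕ) < s := by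
        ext j; have hjn := j.isLt
        simp only [Finset.mem_filter, Finset.mem_univ, true_and, Hadj, ne_eq, Fin.ext_iff]
        omega
      have h2 : (Finset.univ.filter ((Hgen n s m 1).Adj i)).filter (fun j : Fin n => ¬ (j : ℕ) < s)
          = Finset.univ.filter fun j : Fin n => (s + m ≤ (j : ℕ) ∧ (j : ℕ) < n) ∧ j ≠ i := by
        ext j; have hjn := j.isLt
        simp only [Finset.mem_filter, Finset.mem_univ, true_and, Hadj, ne_eq, Fin.ext_iff]
        omega
      rw [← hsplit, h1, h2, cardIco 0 s (by omega),
        cardIcoErase (s + m) n le_rfl i hi2 i.isLt, if_neg (by omega), if_neg (by omega)]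
      omega

lemma key (n s m : ℕ) (hs : 1 ≤ s) (hn : s + m < n) (X Y Z : ℝ) (i : Fin n) :
    ((degMat (Hgen n s m 1) + adjMat (Hgen n s m 1)) *ᵥ
        fun j : Fin n => if (j : ℕ) < s then X else if (j : ℕ) < s + m then Y else Z) i =
      if (i : ℕ) < s then ((n : ℝ) + s - 2) * X + m * Y + ((n : ℝ) - s - m) * Z
      else if (i : ℕ) < s + m then s * X + s * Y
      else s * X + (2 * (n : ℝ) - s - 2 * m - 2) * Z := by
  letI : DecidableRel (Hgen n s m 1).Adj := Classical.decRel _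
  simp only [Matrix.add_mulVec, Pi.add_apply, degMat, adjMat, Matrix.mulVec_diagonal,
    SimpleGraph.adjMatrix_mulVec_apply, SimpleGraph.neighborFinset_eq_filter]
  rw [sum_vv, deg_eq n s m hs hn i]
  rcases Nat.lt_or_ge (i : ℕ) s with hi | hi
  · have e1 : (Finset.univ.filter ((Hgen n s m 1).Adj i)).filter (fun j : Fin n => (j : ℕ) < s)
        = Finset.univ.filter fun j : Fin n => (0 ≤ (j : ℕ) ∧ (j : ℕ) < s) ∧ j ≠ i := by
      ext j; have hjn := j.isLt
      simp only [Finset.mem_filter, Finset.mem_univ, true_and, Hadj, ne_eq, Fin.ext_iff]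
      omega
    have e2 : (Finset.univ.filter ((Hgen n s m 1).Adj i)).filter
          (fun j : Fin n => s ≤ (j : ℕ) ∧ (j : ℕ) < s + m)
        = Finset.univ.filter fun j : Fin n => s ≤ (j : ℕ) ∧ (j : ℕ) < s + m := by
      ext j; have hjn := j.isLt
      simp only [Finset.mem_filter, Finset.mem_univ, true_and, Hadj, ne_eq, Fin.ext_iff]
      omega
    have e3 : (Finset.univ.filter ((Hgen n s m 1).Adj i)).filter
          (fun j : Fin n => s + m ≤ (j : ℕ))
        = Finset.univ.filter fun j : Fin n => s + m ≤ (j : ℕ) ∧ (j : ℕ) < n := by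
      ext j; have hjn := j.isLt
      simp only [Finset.mem_filter, Finset.mem_univ, true_and, Hadj, ne_eq, Fin.ext_iff]
      omega
    rw [e1, e2, e3, cardIcoErase 0 s (by omega) i (Nat.zero_le _) hi, cardIco s (s + m) (by omega),
      cardIco (s + m) n le_rfl, if_pos hi, if_pos hi, if_pos hi,
      show s - 0 - 1 = s - 1 from by omega, show s + m - s = m from by omega,
      Nat.cast_sub (by omega : 1 ≤ n), Nat.cast_sub (by omega : 1 ≤ s),
      Nat.cast_sub (by omega : s + m ≤ n)]
    push_cast
    ring
  · rcases Nat.lt_or_ge (i : ℕ) (s + m) with hi2 | hi2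
    · have e1 : (Finset.univ.filter ((Hgen n s m 1).Adj i)).filter (fun j : Fin n => (j : ℕ) < s)
          = Finset.univ.filter fun j : Fin n => 0 ≤ (j : ℕ) ∧ (j : ℕ) < s := by
        ext j; have hjn := j.isLt
        simp only [Finset.mem_filter, Finset.mem_univ, true_and, Hadj, ne_eq, Fin.ext_iff]
        omega
      have e2 : (Finset.univ.filter ((Hgen n s m 1).Adj i)).filter
            (fun j : Fin n => s ≤ (j : ℕ) ∧ (j : ℕ) < s + m)
          = (∅ : Finset (Fin n)) := by
        ext j; have hjn := j.isLt
        simp only [Finset.mem_filter, Finset.mem_univ, true_and, Hadj, ne_eq, Fin.ext_iff,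
          Finset.notMem_empty, iff_false]
        omega
      have e3 : (Finset.univ.filter ((Hgen n s m 1).Adj i)).filter
            (fun j : Fin n => s + m ≤ (j : ℕ))
          = (∅ : Finset (Fin n)) := by
        ext j; have hjn := j.isLt
        simp only [Finset.mem_filter, Finset.mem_univ, true_and, Hadj, ne_eq, Fin.ext_iff,
          Finset.notMem_empty, iff_false]
        omega
      rw [e1, e2, e3, cardIco 0 s (by omega), show s - 0 = s from by omega]
      simp only [if_neg (show ¬ (i : ℕ) < s by omega), if_pos hi2, Finset.card_empty,
        Nat.cast_zero]
      ring
    · have e1 : (Finset.univ.filter ((Hgen n s m 1).Adj i)).filter (fun j : Fin n => (j : ℕ) < s)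
          = Finset.univ.filter fun j : Fin n => 0 ≤ (j : ℕ) ∧ (j : ℕ) < s := by
        ext j; have hjn := j.isLt
        simp only [Finset.mem_filter, Finset.mem_univ, true_and, Hadj, ne_eq, Fin.ext_iff]
        omega
      have e2 : (Finset.univ.filter ((Hgen n s m 1).Adj i)).filter
            (fun j : Fin n => s ≤ (j : ℕ) ∧ (j : ℕ) < s + m)
          = (∅ : Finset (Fin n)) := by
        ext j; have hjn := j.isLt
        simp only [Finset.mem_filter, Finset.mem_univ, true_and, Hadj, ne_eq, Fin.ext_iff,
          Finset.notMem_empty, iff_false]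
        omega
      have e3 : (Finset.univ.filter ((Hgen n s m 1).Adj i)).filter
            (fun j : Fin n => s + m ≤ (j : ℕ))
          = Finset.univ.filter fun j : Fin n => (s + m ≤ (j : ℕ) ∧ (j : ℕ) < n) ∧ j ≠ i := by
        ext j; have hjn := j.isLt
        simp only [Finset.mem_filter, Finset.mem_univ, true_and, Hadj, ne_eq, Fin.ext_iff]
        omega
      rw [e1, e2, e3, cardIco 0 s (by omega), cardIcoErase (s + m) n le_rfl i hi2 i.isLt,
        show s - 0 = s from by omega, show n - (s + m) - 1 = n - (s + m + 1) from by omega]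
      simp only [if_neg (show ¬ (i : ℕ) < s by omega), if_neg (show ¬ (i : ℕ) < s + m by omega),
        Finset.card_empty, Nat.cast_zero, Nat.cast_add, Nat.cast_sub (show s + m + 1 ≤ n by omega)]
      push_cast
      ring

lemma twin (n s m : ℕ) (hs : 1 ≤ s) (hn : s + m < n) (i j : Fin n) (hne : i ≠ j)
    (hcl : ((i : ℕ) < s ∧ (j : ℕ) < s)
      ∨ (s ≤ (i : ℕ) ∧ (i : ℕ) < s + m ∧ s ≤ (j : ℕ) ∧ (j : ℕ) < s + m)
      ∨ (s + m ≤ (i : ℕ) ∧ s + m ≤ (j : ℕ)))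
    (μ : ℝ) (v : Fin n → ℝ)
    (hv : (degMat (Hgen n s m 1) + adjMat (Hgen n s m 1)) *ᵥ v = μ • v) (hvij : v i ≠ v j) :
    μ = (if (i : ℕ) < s then (n : ℝ) - 2 else if (i : ℕ) < s + m then (s : ℝ) else (n : ℝ) - m - 2)
    := by
  letI : DecidableRel (Hgen n s m 1).Adj := Classical.decRel _
  have hQ : ∀ p : Fin n, ((degMat (Hgen n s m 1) + adjMat (Hgen n s m 1)) *ᵥ v) p
      = ((Hgen n s m 1).degree p : ℝ) * v p
        + ∑ l : Fin n, (if (Hgen n s m 1).Adj p l then v l else 0) := by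
    intro p
    simp only [Matrix.add_mulVec, Pi.add_apply, degMat, adjMat, Matrix.mulVec_diagonal,
      SimpleGraph.adjMatrix_mulVec_apply, SimpleGraph.neighborFinset_eq_filter,
      Finset.sum_filter]
  have hi' := congrFun hv i
  have hj' := congrFun hv j
  rw [hQ] at hi' hj'
  simp only [Pi.smul_apply, smul_eq_mul] at hi' hj'
  have hvanish : ∀ l ∈ Finset.univ, l ∉ ({i, j} : Finset (Fin n)) →
      ((if (Hgen n s m 1).Adj i l then v l else 0) - (if (Hgen n s m 1).Adj j l then v l else 0))
        = 0 := by
    intro l _ hl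
    simp only [Finset.mem_insert, Finset.mem_singleton, not_or] at hl
    have h1 : (l : ℕ) ≠ (i : ℕ) := fun h => hl.1 (Fin.ext h)
    have h2 : (l : ℕ) ≠ (j : ℕ) := fun h => hl.2 (Fin.ext h)
    have hAdj : (Hgen n s m 1).Adj i l ↔ (Hgen n s m 1).Adj j l := by
      simp only [Hadj, ne_eq, Fin.ext_iff]
      omega
    by_cases hAd : (Hgen n s m 1).Adj i l
    · rw [if_pos hAd, if_pos (hAdj.mp hAd), sub_self]
    · rw [if_neg hAd, if_neg (fun h => hAd (hAdj.mpr h)), sub_self]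
  have hdiff : (∑ l : Fin n, (if (Hgen n s m 1).Adj i l then v l else 0))
      - (∑ l : Fin n, (if (Hgen n s m 1).Adj j l then v l else 0))
      = (if (Hgen n s m 1).Adj i j then v j - v i else 0) := by
    rw [← Finset.sum_sub_distrib,
      ← Finset.sum_subset (Finset.subset_univ ({i, j} : Finset (Fin n))) hvanish,
      Finset.sum_pair hne]
    have hii : ¬ (Hgen n s m 1).Adj i i := SimpleGraph.irrefl _
    have hjj : ¬ (Hgen n s m 1).Adj j j := SimpleGraph.irrefl _
    have hcomm : (Hgen n s m 1).Adj j i ↔ (Hgen n s m 1).Adj i j := SimpleGraph.adj_comm _ _ _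
    by_cases hadj : (Hgen n s m 1).Adj i j
    · rw [if_pos hadj, if_pos hadj, if_pos (hcomm.mpr hadj), if_neg hii, if_neg hjj]; ring
    · rw [if_neg hadj, if_neg hadj, if_neg (fun h => hadj (hcomm.mp h)), if_neg hii, if_neg hjj]
      ring
  rcases hcl with ⟨hi1, hj1⟩ | ⟨hi1, hi2, hj1, hj2⟩ | ⟨hi1, hj1⟩
  · have hadj : (Hgen n s m 1).Adj i j := Hadj.mpr ⟨hne, Or.inl hi1⟩
    rw [if_pos hadj] at hdiff
    have hdi : (((Hgen n s m 1).degree i : ℕ) : ℝ) = (n : ℝ) - 1 := by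
      rw [deg_eq n s m hs hn i, if_pos hi1, Nat.cast_sub (by omega)]; norm_num
    have hdj : (((Hgen n s m 1).degree j : ℕ) : ℝ) = (n : ℝ) - 1 := by
      rw [deg_eq n s m hs hn j, if_pos hj1, Nat.cast_sub (by omega)]; norm_num
    rw [hdi] at hi'; rw [hdj] at hj'
    have hfac : (μ - ((n : ℝ) - 2)) * (v i - v j) = 0 := by linear_combination hj' - hi' + hdiff
    rcases mul_eq_zero.mp hfac with h | h
    · rw [if_pos hi1]; linarith
    · exact absurd (sub_eq_zero.mp h) hvij
  · have hadj : ¬ (Hgen n s m 1).Adj i j := by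
      rw [Hadj]; rintro ⟨-, h' | h' | ⟨h1', h2'⟩⟩ <;> omega
    rw [if_neg hadj] at hdiff
    have hdi : (((Hgen n s m 1).degree i : ℕ) : ℝ) = (s : ℝ) := by
      rw [deg_eq n s m hs hn i, if_neg (by omega), if_pos hi2]
    have hdj : (((Hgen n s m 1).degree j : ℕ) : ℝ) = (s : ℝ) := by
      rw [deg_eq n s m hs hn j, if_neg (by omega), if_pos hj2]
    rw [hdi] at hi'; rw [hdj] at hj'
    have hfac : (μ - (s : ℝ)) * (v i - v j) = 0 := by linear_combination hj' - hi' + hdiff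
    rcases mul_eq_zero.mp hfac with h | h
    · rw [if_neg (by omega), if_pos hi2]; linarith
    · exact absurd (sub_eq_zero.mp h) hvij
  · have hadj : (Hgen n s m 1).Adj i j := Hadj.mpr ⟨hne, Or.inr (Or.inr ⟨hi1, hj1⟩)⟩
    rw [if_pos hadj] at hdiff
    have hdi : (((Hgen n s m 1).degree i : ℕ) : ℝ) = (n : ℝ) - (m : ℝ) - 1 := by
      rw [deg_eq n s m hs hn i, if_neg (by omega), if_neg (by omega),
        show n - (s + m) - 1 = n - (s + m + 1) from by omega, Nat.cast_add,
        Nat.cast_sub (by omega : s + m + 1 ≤ n)]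
      push_cast; ring
    have hdj : (((Hgen n s m 1).degree j : ℕ) : ℝ) = (n : ℝ) - (m : ℝ) - 1 := by
      rw [deg_eq n s m hs hn j, if_neg (by omega), if_neg (by omega),
        show n - (s + m) - 1 = n - (s + m + 1) from by omega, Nat.cast_add,
        Nat.cast_sub (by omega : s + m + 1 ≤ n)]
      push_cast; ring
    rw [hdi] at hi'; rw [hdj] at hj'
    have hfac : (μ - ((n : ℝ) - (m : ℝ) - 2)) * (v i - v j) = 0 := by
      linear_combination hj' - hi' + hdiff
    rcases mul_eq_zero.mp hfac with h | h
    · rw [if_neg (by omega), if_neg (by omega)]; linarith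
    · exact absurd (sub_eq_zero.mp h) hvij

lemma specC (n s m : ℕ) (hs : 1 ≤ s) (hm : 1 ≤ m) (hn : s + m < n) {μ : ℝ}
    (h : gfun n s m μ = 0) :
    μ ∈ spectrum ℝ (degMat (Hgen n s m 1) + adjMat (Hgen n s m 1)) := by
  have hdet : (μ • (1 : Matrix (Fin 3) (Fin 3) ℝ)
      - !![(n:ℝ)+(s:ℝ)-2, (m:ℝ), (n:ℝ)-(s:ℝ)-(m:ℝ); (s:ℝ), (s:ℝ), 0;
          (s:ℝ), 0, 2*(n:ℝ)-(s:ℝ)-2*(m:ℝ)-2]).det = 0 := by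
    rw [det3]; exact h
  obtain ⟨w, hw0, hw⟩ := (eig_iff_det _ μ).mpr hdet
  have e0 := congrFun hw 0
  have e1 := congrFun hw 1
  have e2 := congrFun hw 2
  simp [Matrix.mulVec, dotProduct, Fin.sum_univ_three, Matrix.vecHead,
    Matrix.vecTail] at e0 e1 e2
  rw [mem_spectrum_iff_eig]
  refine ⟨(fun j : Fin n => if (j : ℕ) < s then w 0 else if (j : ℕ) < s + m then w 1 else w 2),
    ?_, ?_⟩
  · obtain ⟨p, hp⟩ := Function.ne_iff.mp hw0
    intro hzero
    apply hp
    fin_cases p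
    · have h2 := congrFun hzero ⟨0, by omega⟩
      have h3 : (if ((⟨0, by omega⟩ : Fin n) : ℕ) < s then w 0
          else if ((⟨0, by omega⟩ : Fin n) : ℕ) < s + m then w 1 else w 2) = 0 := h2
      rwa [if_pos (show ((⟨0, by omega⟩ : Fin n) : ℕ) < s from by show (0:ℕ) < s; omega)] at h3
    · have h2 := congrFun hzero ⟨s, by omega⟩
      have h3 : (if ((⟨s, by omega⟩ : Fin n) : ℕ) < s then w 0
          else if ((⟨s, by omega⟩ : Fin n) : ℕ) < s + m then w 1 else w 2) = 0 := h2
      rwa [if_neg (show ¬ ((⟨s, by omega⟩ : Fin n) : ℕ) < s from by show ¬ s < s; omega),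
        if_pos (show ((⟨s, by omega⟩ : Fin n) : ℕ) < s + m from by show s < s + m; omega)] at h3
    · have h2 := congrFun hzero ⟨s + m, by omega⟩
      have h3 : (if ((⟨s + m, by omega⟩ : Fin n) : ℕ) < s then w 0
          else if ((⟨s + m, by omega⟩ : Fin n) : ℕ) < s + m then w 1 else w 2) = 0 := h2
      rwa [if_neg (show ¬ ((⟨s + m, by omega⟩ : Fin n) : ℕ) < s from by show ¬ s + m < s; omega),
        if_neg (show ¬ ((⟨s + m, by omega⟩ : Fin n) : ℕ) < s + m from by
          show ¬ s + m < s + m; omega)] at h3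
  · funext i
    rw [key n s m hs hn]
    rcases Nat.lt_or_ge (i : ℕ) s with hi | hi
    · simp only [Pi.smul_apply, smul_eq_mul, if_pos hi]
      linear_combination e0
    · rcases Nat.lt_or_ge (i : ℕ) (s + m) with hi2 | hi2
      · simp only [Pi.smul_apply, smul_eq_mul, if_neg (show ¬ (i : ℕ) < s by omega), if_pos hi2]
        linear_combination e1
      · simp only [Pi.smul_apply, smul_eq_mul, if_neg (show ¬ (i : ℕ) < s by omega),
          if_neg (show ¬ (i : ℕ) < s + m by omega)]
        linear_combination e2

lemma specB (n s m : ℕ) (hs : 1 ≤ s) (hm : 1 ≤ m) (hn : s + m < n) {μ : ℝ}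
    (h : μ ∈ spectrum ℝ (degMat (Hgen n s m 1) + adjMat (Hgen n s m 1))) :
    μ = (n : ℝ) - 2 ∨ μ = (s : ℝ) ∨ μ = (n : ℝ) - m - 2 ∨ gfun n s m μ = 0 := by
  obtain ⟨v, hv0, hv⟩ := (mem_spectrum_iff_eig _ μ).mp h
  by_cases hA : ∃ i j : Fin n, (i : ℕ) < s ∧ (j : ℕ) < s ∧ v i ≠ v j
  · obtain ⟨i, j, hi, hj, hvij⟩ := hA
    have hne : i ≠ j := fun he => hvij (by rw [he])
    have ht := twin n s m hs hn i j hne (Or.inl ⟨hi, hj⟩) μ v hv hvij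
    rw [if_pos hi] at ht; exact Or.inl ht
  by_cases hB : ∃ i j : Fin n,
      (s ≤ (i : ℕ) ∧ (i : ℕ) < s + m) ∧ (s ≤ (j : ℕ) ∧ (j : ℕ) < s + m) ∧ v i ≠ v j
  · obtain ⟨i, j, hi, hj, hvij⟩ := hB
    have hne : i ≠ j := fun he => hvij (by rw [he])
    have ht := twin n s m hs hn i j hne (Or.inr (Or.inl ⟨hi.1, hi.2, hj.1, hj.2⟩)) μ v hv hvij
    rw [if_neg (by omega), if_pos hi.2] at ht; exact Or.inr (Or.inl ht)
  by_cases hC : ∃ i j : Fin n, s + m ≤ (i : ℕ) ∧ s + m ≤ (j : ℕ) ∧ v i ≠ v j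
  · obtain ⟨i, j, hi, hj, hvij⟩ := hC
    have hne : i ≠ j := fun he => hvij (by rw [he])
    have ht := twin n s m hs hn i j hne (Or.inr (Or.inr ⟨hi, hj⟩)) μ v hv hvij
    rw [if_neg (by omega), if_neg (by omega)] at ht; exact Or.inr (Or.inr (Or.inl ht))
  push_neg at hA hB hC
  have h0n : 0 < n := by omega
  have hsn : s < n := by omega
  have hvv : v = fun j : Fin n => if (j : ℕ) < s then v ⟨0, h0n⟩
      else if (j : ℕ) < s + m then v ⟨s, hsn⟩ else v ⟨s + m, hn⟩ := by
    funext j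
    rcases Nat.lt_or_ge (j : ℕ) s with hj | hj
    · rw [if_pos hj]; exact hA j ⟨0, h0n⟩ hj (by show (0:ℕ) < s; omega)
    · rcases Nat.lt_or_ge (j : ℕ) (s + m) with hj2 | hj2
      · rw [if_neg (by omega), if_pos hj2]
        exact hB j ⟨s, hsn⟩ ⟨hj, hj2⟩ ⟨by show s ≤ s; omega, by show s < s + m; omega⟩
      · rw [if_neg (by omega), if_neg (by omega)]
        exact hC j ⟨s + m, hn⟩ hj2 (by show s + m ≤ s + m; omega)
  rw [hvv] at hv
  have e0 := congrFun hv ⟨0, h0n⟩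
  have e1 := congrFun hv ⟨s, hsn⟩
  have e2 := congrFun hv ⟨s + m, hn⟩
  rw [key n s m hs hn] at e0 e1 e2
  simp only [Pi.smul_apply, smul_eq_mul, if_pos (show (0 : ℕ) < s by omega),
    if_neg (show ¬ s < s by omega), if_pos (show s < s + m by omega),
    if_neg (show ¬ s + m < s by omega), if_neg (show ¬ s + m < s + m by omega)] at e0 e1 e2
  right; right; right
  have hwmul : (!![(n:ℝ)+(s:ℝ)-2, (m:ℝ), (n:ℝ)-(s:ℝ)-(m:ℝ); (s:ℝ), (s:ℝ), 0;
        (s:ℝ), 0, 2*(n:ℝ)-(s:ℝ)-2*(m:ℝ)-2]) *ᵥ ![v ⟨0, h0n⟩, v ⟨s, hsn⟩, v ⟨s + m, hn⟩]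
      = μ • ![v ⟨0, h0n⟩, v ⟨s, hsn⟩, v ⟨s + m, hn⟩] := by
    funext p
    fin_cases p <;>
      simp [Matrix.mulVec, dotProduct, Fin.sum_univ_three, Matrix.vecHead,
        Matrix.vecTail] <;>
      [linear_combination e0; linear_combination e1; linear_combination e2]
  have hwne : ![v ⟨0, h0n⟩, v ⟨s, hsn⟩, v ⟨s + m, hn⟩] ≠ 0 := by
    obtain ⟨j, hj⟩ := Function.ne_iff.mp hv0
    have hj' := congrFun hvv j
    intro hzero
    have hz0 := congrFun hzero 0
    have hz1 := congrFun hzero 1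
    have hz2 := congrFun hzero 2
    simp only [Matrix.cons_val_zero, Matrix.cons_val_one, Matrix.head_cons, Pi.zero_apply,
      Matrix.cons_val_two, Matrix.tail_cons, Matrix.vecHead, Matrix.vecTail] at hz0 hz1 hz2
    apply hj
    rw [hj']
    rcases Nat.lt_or_ge (j : ℕ) s with h1 | h1
    · rw [if_pos h1]; exact hz0
    · rcases Nat.lt_or_ge (j : ℕ) (s + m) with h2 | h2
      · rw [if_neg (by omega), if_pos h2]; exact hz1
      · rw [if_neg (by omega), if_neg (by omega)]; exact hz2
  have hdet := (eig_iff_det _ μ).mp ⟨_, hwne, hwmul⟩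
  rwa [det3] at hdet

theorem mainHgen (n s m : ℕ) (hs : 1 ≤ s) (hm : 2 ≤ m) (hn : s + m < n) :
    IsGreatest {x : ℝ | gfun n s m x = 0} (gq (Hgen n s m 1)) := by
  have hm1 : 1 ≤ m := by omega
  set P : Cubic ℝ := ⟨1, -(3*(n:ℝ) - s + 2*((s:ℝ) - m + 1) - 6),
    2*(n:ℝ)^2 + ((s:ℝ) + 2*((s:ℝ) - m + 1) - 8)*(n:ℝ) - 4*(s:ℝ)^2
      + 4*(((s:ℝ) - m + 1) - 1)*(s:ℝ) - 4*((s:ℝ) - m + 1) + 8,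
    -2*(s:ℝ)^3 + (4*(n:ℝ) + 4*((s:ℝ) - m + 1) - 10)*(s:ℝ)^2
      - (2*(n:ℝ)^2 + (4*((s:ℝ) - m + 1) - 10)*(n:ℝ) + 2*((s:ℝ) - m + 1)^2
        - 10*((s:ℝ) - m + 1) + 12)*(s:ℝ)⟩ with hP
  have heval : ∀ x : ℝ, P.toPoly.eval x = gfun n s m x := by
    intro x
    simp [hP, Cubic.toPoly, gfun]
    ring
  have hPne : P.toPoly ≠ 0 := Cubic.ne_zero_of_a_ne_zero (by rw [hP]; exact one_ne_zero)
  have hdeg3 : P.toPoly.degree = 3 := Cubic.degree_of_a_ne_zero (by rw [hP]; exact one_ne_zero)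
  have hlead : P.toPoly.leadingCoeff = 1 := by
    rw [Cubic.leadingCoeff_of_a_ne_zero (by rw [hP]; exact one_ne_zero)]
  have htend := Polynomial.tendsto_atTop_of_leadingCoeff_nonneg P.toPoly
    (by rw [hdeg3]; decide) (by rw [hlead]; norm_num)
  obtain ⟨B, hB0, hBN⟩ :=
    ((htend.eventually_ge_atTop 0).and (Filter.eventually_ge_atTop ((n:ℝ) - 2))).exists
  have hneg : Polynomial.eval ((n:ℝ) - 2) P.toPoly < 0 := by
    rw [heval]
    have hg : gfun n s m ((n:ℝ) - 2) = -2 * s * m * ((m:ℝ) - 1) := by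
      simp only [gfun]; ring
    rw [hg]
    have h1 : (1:ℝ) ≤ (s:ℝ) := by exact_mod_cast hs
    have h2 : (2:ℝ) ≤ (m:ℝ) := by exact_mod_cast hm
    nlinarith [mul_pos (mul_pos (show (0:ℝ) < 2*(s:ℝ) by linarith)
      (show (0:ℝ) < (m:ℝ) by linarith)) (show (0:ℝ) < (m:ℝ) - 1 by linarith)]
  obtain ⟨x₀, hx₀I, hx₀⟩ := intermediate_value_Icc (by linarith : (n:ℝ) - 2 ≤ B)
    (Polynomial.continuous P.toPoly).continuousOn
    (Set.mem_Icc.mpr ⟨le_of_lt hneg, hB0⟩)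
  have hx₀g : gfun n s m x₀ = 0 := by rw [← heval]; exact hx₀
  have hx₀gt : (n:ℝ) - 2 < x₀ := by
    refine lt_of_le_of_ne hx₀I.1 (fun he => ?_)
    rw [← he] at hx₀
    exact absurd hx₀ (ne_of_lt hneg)
  have hSgfin : {x : ℝ | gfun n s m x = 0}.Finite := by
    apply Set.Finite.subset (Polynomial.finite_setOf_isRoot hPne)
    intro x hx
    simp only [Set.mem_setOf_eq] at hx ⊢
    rw [Polynomial.IsRoot, heval]
    exact hx
  have hsub : spectrum ℝ (degMat (Hgen n s m 1) + adjMat (Hgen n s m 1)) ⊆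
      {x : ℝ | gfun n s m x = 0} ∪ {(n:ℝ) - 2, (s:ℝ), (n:ℝ) - m - 2} := by
    intro μ hμ
    rcases specB n s m hs hm1 hn hμ with h | h | h | h
    · exact Or.inr (by simp [h])
    · exact Or.inr (by simp [h])
    · exact Or.inr (by simp [h])
    · exact Or.inl h
  have hspecfin : (spectrum ℝ (degMat (Hgen n s m 1) + adjMat (Hgen n s m 1))).Finite :=
    Set.Finite.subset (hSgfin.union
      (((Set.finite_singleton _).insert _).insert _)) hsub
  have hbdd := hspecfin.bddAbove
  have hx₀spec := specC n s m hs hm1 hn hx₀g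
  have hqmem : gq (Hgen n s m 1) ∈ spectrum ℝ (degMat (Hgen n s m 1) + adjMat (Hgen n s m 1)) :=
    Set.Nonempty.csSup_mem ⟨x₀, hx₀spec⟩ hspecfin
  have hge : x₀ ≤ gq (Hgen n s m 1) := le_csSup hbdd hx₀spec
  constructor
  · rcases specB n s m hs hm1 hn hqmem with h | h | h | h
    · exfalso; rw [h] at hge; linarith
    · exfalso
      have hsle : (s:ℝ) + 2 ≤ (n:ℝ) := by exact_mod_cast (by omega : s + 2 ≤ n)
      rw [h] at hge; linarith
    · exfalso
      have : (0:ℝ) ≤ (m:ℝ) := Nat.cast_nonneg m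
      rw [h] at hge; linarith
    · exact h
  · intro y hy
    exact le_csSup hbdd (specC n s m hs hm1 hn hy)


set_option maxHeartbeats 2000000 in
/-- Lemma 3.2 (signless Laplacian case): `q(H(n,δ,k))` is the largest real root of `g`. -/
theorem stmt_7 (n δ k : ℕ) (hδ : 1 ≤ δ) (hk : k < δ) (hn : (2 * δ : ℤ) - k + 1 < n) :
    IsGreatest {x : ℝ | x ^ 3 - (3 * (n : ℝ) - (δ : ℝ) + 2 * (k : ℝ) - 6) * x ^ 2 + (2 * (n : ℝ) ^ 2 + ((δ : ℝ) + 2 * (k : ℝ) - 8) * (n : ℝ) - 4 * (δ : ℝ) ^ 2 + 4 * ((k : ℝ) - 1) * (δ : ℝ) - 4 * (k : ℝ) + 8) * x - 2 * (δ : ℝ) ^ 3 + (4 * (n : ℝ) + 4 * (k : ℝ) - 10) * (δ : ℝ) ^ 2 - (2 * (n : ℝ) ^ 2 + (4 * (k : ℝ) - 10) * (n : ℝ) + 2 * (k : ℝ) ^ 2 - 10 * (k : ℝ) + 12) * (δ : ℝ) = 0} (gq (Hndk n δ k)) := by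
  
  have hkδ : k ≤ δ := hk.le
  have hm2 : 2 ≤ δ - k + 1 := by omega
  have hnn : δ + (δ - k + 1) < n := by omega
  have hcast : ((δ - k + 1 : ℕ) : ℝ) = (δ : ℝ) - (k : ℝ) + 1 := by
    rw [Nat.cast_add, Nat.cast_sub hkδ, Nat.cast_one]
  have hset : {x : ℝ | x ^ 3 - (3 * (n : ℝ) - (δ : ℝ) + 2 * (k : ℝ) - 6) * x ^ 2 + (2 * (n : ℝ) ^ 2 + ((δ : ℝ) + 2 * (k : ℝ) - 8) * (n : ℝ) - 4 * (δ : ℝ) ^ 2 + 4 * ((k : ℝ) - 1) * (δ : ℝ) - 4 * (k : ℝ) + 8) * x - 2 * (δ : ℝ) ^ 3 + (4 * (n : ℝ) + 4 * (k : ℝ) - 10) * (δ : ℝ) ^ 2 - (2 * (n : ℝ) ^ 2 + (4 * (k : ℝ) - 10) * (n : ℝ) + 2 * (k : ℝ) ^ 2 - 10 * (k : ℝ) + 12) * (δ : ℝ) = 0}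
      = {x : ℝ | gfun n δ ((δ - k + 1 : ℕ) : ℝ) x = 0} := by
    ext x
    simp only [Set.mem_setOf_eq, gfun, hcast]
    constructor <;> intro h <;> linear_combination h
  rw [hset, show Hndk n δ k = Hgen n δ (δ - k + 1) 1 from rfl]
  exact mainHgen n δ (δ - k + 1) hδ hm2 hnn
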